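/- arXiv:0812.5030 — 4 statements merged into one kernel-verified Lean document; each statement's English description precedes it below -/
import Mathlib

section
/- Let A, B, C, D be points in Euclidean 3-space ℝ³ with A ≠ B, and suppose neither C nor D lies on the line through A and B. Let θ be the dihedral angle of the tetrahedron ABCD along the edge AB, i.e., the angle between the vectors C − C′ and D − D′, where C′ and D′ are the orthogonal projections of C and of D onto the line through A and B. Then sin θ = (3/2) · [ABCD] · dist(A,B) / ([ABC] · [ABD]). -/
open RealInnerProductSpace

/-- The cross product on `EuclideanSpace ℝ (Fin 3)`. -/
noncomputable def cross3 (u v : EuclideanSpace ℝ (Fin 3)) : EuclideanSpace ℝ (Fin 3) :=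
  WithLp.toLp 2 ![u 1 * v 2 - u 2 * v 1, u 2 * v 0 - u 0 * v 2, u 0 * v 1 - u 1 * v 0]

/-- The unsigned area of the triangle `ABC` in `ℝ³`. -/
noncomputable def triArea (A B C : EuclideanSpace ℝ (Fin 3)) : ℝ :=
  (1 / 2) * ‖cross3 (B - A) (C - A)‖

/-- The unsigned volume of the tetrahedron `ABCD` in `ℝ³`. -/
noncomputable def tetVol (A B C D : EuclideanSpace ℝ (Fin 3)) : ℝ :=
  (1 / 6) * |⟪cross3 (B - A) (C - A), D - A⟫|

lemma inner3 (u v : EuclideanSpace ℝ (Fin 3)) :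
    ⟪u, v⟫ = u 0 * v 0 + u 1 * v 1 + u 2 * v 2 := by
  simp [PiLp.inner_apply, RCLike.inner_apply, Fin.sum_univ_three]; ring

lemma lagrange (u v : EuclideanSpace ℝ (Fin 3)) :
    ⟪cross3 u v, cross3 u v⟫ = ⟪u,u⟫ * ⟪v,v⟫ - ⟪u,v⟫ * ⟪u,v⟫ := by
  simp only [inner3]; simp [cross3, Fin.sum_univ_three]; ring

lemma sq_inj {x y : ℝ} (hx : 0 ≤ x) (hy : 0 ≤ y) (h : x ^ 2 = y ^ 2) : x = y := by
  have := (sq_eq_sq_iff_abs_eq_abs x y).mp h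
  rwa [abs_of_nonneg hx, abs_of_nonneg hy] at this

lemma gram (b c d : EuclideanSpace ℝ (Fin 3)) :
    ⟪cross3 b c, d⟫ ^ 2 =
      ⟪b,b⟫ * ⟪c,c⟫ * ⟪d,d⟫ + 2 * ⟪b,c⟫ * ⟪c,d⟫ * ⟪b,d⟫
        - ⟪b,b⟫ * ⟪c,d⟫ ^ 2 - ⟪c,c⟫ * ⟪b,d⟫ ^ 2 - ⟪d,d⟫ * ⟪b,c⟫ ^ 2 := by
  simp only [inner3]; simp [cross3, Fin.sum_univ_three]; ring

theorem stmt0 (A B C D : EuclideanSpace ℝ (Fin 3))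
    (hAB : A ≠ B)
    (hC : C - A ∉ Submodule.span ℝ ({B - A} : Set (EuclideanSpace ℝ (Fin 3))))
    (hD : D - A ∉ Submodule.span ℝ ({B - A} : Set (EuclideanSpace ℝ (Fin 3))))
    (θ : ℝ)
    (hθ : θ = InnerProductGeometry.angle
      ((C - A) - (Submodule.orthogonalProjectionOnto
        (Submodule.span ℝ ({B - A} : Set (EuclideanSpace ℝ (Fin 3)))) (C - A) :
          EuclideanSpace ℝ (Fin 3)))
      ((D - A) - (Submodule.orthogonalProjectionOnto
        (Submodule.span ℝ ({B - A} : Set (EuclideanSpace ℝ (Fin 3)))) (D - A) :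
          EuclideanSpace ℝ (Fin 3)))) :
    Real.sin θ = (3 / 2) * tetVol A B C D * dist A B / (triArea A B C * triArea A B D) := by
  set b := B - A with hbdef
  set c := C - A with hcdef
  set d := D - A with hddef
  have hb : b ≠ 0 := sub_ne_zero.mpr (Ne.symm hAB)
  have hbn : ‖b‖ ≠ 0 := norm_ne_zero_iff.mpr hb
  have hs : ⟪b, b⟫ ≠ 0 := by
    rw [real_inner_self_eq_norm_sq]; positivity
  set c' : EuclideanSpace ℝ (Fin 3) := c - (⟪b, c⟫ / ‖b‖ ^ 2) • b with hc'def
  set d' : EuclideanSpace ℝ (Fin 3) := d - (⟪b, d⟫ / ‖b‖ ^ 2) • b with hd'def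
  have hprojc : (c : EuclideanSpace ℝ (Fin 3)) -
      (Submodule.orthogonalProjectionOnto (Submodule.span ℝ ({b} : Set (EuclideanSpace ℝ (Fin 3)))) c :
        EuclideanSpace ℝ (Fin 3)) = c' := by
    rw [← Submodule.starProjection_apply, Submodule.starProjection_singleton]; norm_num [hc'def]
  have hprojd : (d : EuclideanSpace ℝ (Fin 3)) -
      (Submodule.orthogonalProjectionOnto (Submodule.span ℝ ({b} : Set (EuclideanSpace ℝ (Fin 3)))) d :
        EuclideanSpace ℝ (Fin 3)) = d' := by
    rw [← Submodule.starProjection_apply, Submodule.starProjection_singleton]; norm_num [hd'def]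
  have hc'0 : c' ≠ 0 := by
    intro h
    apply hC
    have : c = (⟪b, c⟫ / ‖b‖ ^ 2) • b := by
      have := sub_eq_zero.mp (hc'def ▸ h); linear_combination (norm := module) this
    rw [this]
    exact Submodule.smul_mem _ _ (Submodule.mem_span_singleton_self b)
  have hd'0 : d' ≠ 0 := by
    intro h
    apply hD
    have : d = (⟪b, d⟫ / ‖b‖ ^ 2) • b := by
      have := sub_eq_zero.mp (hd'def ▸ h); linear_combination (norm := module) this
    rw [this]
    exact Submodule.smul_mem _ _ (Submodule.mem_span_singleton_self b)
  have hbs : ‖b‖ ^ 2 = ⟪b, b⟫ := (real_inner_self_eq_norm_sq b).symm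
  -- inner products of projected vectors
  have h1 : ⟪c', c'⟫ = ⟪c, c⟫ - ⟪b, c⟫ ^ 2 / ⟪b, b⟫ := by
    rw [hc'def]
    simp only [inner_sub_left, inner_sub_right, real_inner_smul_left, real_inner_smul_right, hbs]
    rw [real_inner_comm c b]
    set s0 : ℝ := ⟪b, b⟫
    set p0 : ℝ := ⟪b, c⟫
    set cc0 : ℝ := ⟪c, c⟫
    field_simp
    ring
  have h2 : ⟪d', d'⟫ = ⟪d, d⟫ - ⟪b, d⟫ ^ 2 / ⟪b, b⟫ := by
    rw [hd'def]
    simp only [inner_sub_left, inner_sub_right, real_inner_smul_left, real_inner_smul_right, hbs]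
    rw [real_inner_comm d b]
    set s0 : ℝ := ⟪b, b⟫
    set q0 : ℝ := ⟪b, d⟫
    set dd0 : ℝ := ⟪d, d⟫
    field_simp
    ring
  have h3 : ⟪c', d'⟫ = ⟪c, d⟫ - ⟪b, c⟫ * ⟪b, d⟫ / ⟪b, b⟫ := by
    rw [hc'def, hd'def]
    simp only [inner_sub_left, inner_sub_right, real_inner_smul_left, real_inner_smul_right, hbs]
    rw [real_inner_comm c b, real_inner_comm d b]
    set s0 : ℝ := ⟪b, b⟫
    set p0 : ℝ := ⟪b, c⟫
    set q0 : ℝ := ⟪b, d⟫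
    set cd0 : ℝ := ⟪c, d⟫
    field_simp
    try ring
  set X : ℝ := ⟪c', c'⟫ * ⟪d', d'⟫ - ⟪c', d'⟫ * ⟪c', d'⟫ with hXdef
  set T : ℝ := ⟪cross3 b c, d⟫ with hTdef
  have hXs : X * ⟪b, b⟫ = T ^ 2 := by
    rw [hXdef, h1, h2, h3, hTdef, gram]
    set s0 : ℝ := ⟪b, b⟫
    set p0 : ℝ := ⟪b, c⟫
    set q0 : ℝ := ⟪b, d⟫
    set cc0 : ℝ := ⟪c, c⟫
    set dd0 : ℝ := ⟪d, d⟫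
    set cd0 : ℝ := ⟪c, d⟫
    field_simp
    try ring
  have hsp : (0:ℝ) < ⟪b, b⟫ := by rw [← hbs]; positivity
  have hX0 : 0 ≤ X := by nlinarith [sq_nonneg T]
  -- norms of cross products
  have hnc : ‖cross3 b c‖ = ‖b‖ * ‖c'‖ := by
    have e1 : ‖cross3 b c‖ ^ 2 = (‖b‖ * ‖c'‖) ^ 2 := by
      rw [← real_inner_self_eq_norm_sq, lagrange, mul_pow, hbs,
        ← real_inner_self_eq_norm_sq, h1]
      set s0 : ℝ := ⟪b, b⟫
      set p0 : ℝ := ⟪b, c⟫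
      set cc0 : ℝ := ⟪c, c⟫
      field_simp
    exact sq_inj (norm_nonneg _) (by positivity) e1
  have hnd : ‖cross3 b d‖ = ‖b‖ * ‖d'‖ := by
    have e1 : ‖cross3 b d‖ ^ 2 = (‖b‖ * ‖d'‖) ^ 2 := by
      rw [← real_inner_self_eq_norm_sq, lagrange, mul_pow, hbs,
        ← real_inner_self_eq_norm_sq, h2]
      set s0 : ℝ := ⟪b, b⟫
      set q0 : ℝ := ⟪b, d⟫
      set dd0 : ℝ := ⟪d, d⟫
      field_simp
    exact sq_inj (norm_nonneg _) (by positivity) e1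
  -- |T| = sqrt X * ‖b‖
  have hT : |T| = Real.sqrt X * ‖b‖ := by
    have : (Real.sqrt X * ‖b‖) ^ 2 = T ^ 2 := by
      rw [mul_pow, Real.sq_sqrt hX0, hbs, hXs]
    have habs : |T| ^ 2 = (Real.sqrt X * ‖b‖) ^ 2 := by rw [this, sq_abs]
    exact sq_inj (abs_nonneg T) (by positivity) habs
  -- sin θ
  have hsin : Real.sin θ = Real.sqrt X / (‖c'‖ * ‖d'‖) := by
    rw [hθ, hprojc, hprojd]
    have := InnerProductGeometry.sin_angle_mul_norm_mul_norm c' d'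
    rw [← hXdef] at this
    have hne : ‖c'‖ * ‖d'‖ ≠ 0 := by
      exact mul_ne_zero (norm_ne_zero_iff.mpr hc'0) (norm_ne_zero_iff.mpr hd'0)
    field_simp [hne] at this ⊢
    linarith [this]
  rw [hsin]
  have hdist : dist A B = ‖b‖ := by rw [dist_eq_norm, hbdef, norm_sub_rev]
  rw [triArea, triArea, tetVol, ← hbdef, ← hcdef, ← hddef, ← hTdef, hnc, hnd, hdist, hT]
  have hcn : ‖c'‖ ≠ 0 := norm_ne_zero_iff.mpr hc'0
  have hdn : ‖d'‖ ≠ 0 := norm_ne_zero_iff.mpr hd'0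
  field_simp [hbn, hcn, hdn]
  ring
end

section
/- Let A, B, C be affinely independent points in a Euclidean plane (or Euclidean space), let S ≥ 1 be such that the ratio of the longest side length of triangle ABC to its shortest side length is at most S, and let β ∈ (0, π) be the largest of the three interior angles of the triangle. Then every interior angle α of triangle ABC satisfies α > (π − β)/(3S). -/
open EuclideanGeometry

private lemma sine_rule_vec {V : Type*} [NormedAddCommGroup V] [InnerProductSpace ℝ V]
    (x y : V) :
    Real.sin (InnerProductGeometry.angle x y) * (‖x‖ * ‖y‖) =
    Real.sin (InnerProductGeometry.angle (-x) (y - x)) * (‖x‖ * ‖y - x‖) := by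
  have h1 := InnerProductGeometry.sin_angle_mul_norm_mul_norm x y
  have h2 := InnerProductGeometry.sin_angle_mul_norm_mul_norm (-x) (y - x)
  rw [norm_neg] at h2
  rw [h1, h2]
  congr 1
  simp only [inner_sub_left, inner_sub_right, inner_neg_left, inner_neg_right,
    real_inner_comm x y]
  ring

private lemma sine_rule_pt {V : Type*} {P : Type*} [NormedAddCommGroup V]
    [InnerProductSpace ℝ V] [MetricSpace P] [NormedAddTorsor V P]
    (A B C : P) (h : A ≠ B) :
    Real.sin (∠ B A C) * dist A C = Real.sin (∠ A B C) * dist B C := by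
  have key := sine_rule_vec (B -ᵥ A) (C -ᵥ A)
  have h1 : -(B -ᵥ A) = A -ᵥ B := neg_vsub_eq_vsub_rev B A
  have h2 : (C -ᵥ A) - (B -ᵥ A) = C -ᵥ B := vsub_sub_vsub_cancel_right C B A
  rw [h1, h2] at key
  have hBA : ‖B -ᵥ A‖ = dist A B := by rw [← dist_eq_norm_vsub V, dist_comm]
  have hCA : ‖C -ᵥ A‖ = dist A C := by rw [← dist_eq_norm_vsub V, dist_comm]
  have hCB : ‖C -ᵥ B‖ = dist B C := by rw [← dist_eq_norm_vsub V, dist_comm]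
  rw [hBA, hCA, hCB] at key
  have hAB : (0:ℝ) < dist A B := dist_pos.2 h
  unfold EuclideanGeometry.angle
  apply mul_left_cancel₀ (ne_of_gt hAB)
  linear_combination key

private lemma arith_rel (sa sb d1 d2 m S : ℝ) (hsa : 0 ≤ sa) (hsb : 0 ≤ sb) (hm : 0 < m)
    (h1' : d1 ≤ S * m) (h2 : m ≤ d2) (heq : sa * d1 = sb * d2) : sb ≤ S * sa := by
  nlinarith [mul_le_mul_of_nonneg_left h2 hsb, mul_le_mul_of_nonneg_left h1' hsa]

private lemma sin_lb {β : ℝ} (h3 : Real.pi / 3 ≤ β) (hπ : β < Real.pi) :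
    (Real.pi - β) / 3 ≤ Real.sin β := by
  have hpi := Real.pi_pos
  set t := Real.pi - β with ht
  have htpos : 0 < t := by simp [ht]; linarith
  have htle : t ≤ 2 * Real.pi / 3 := by simp [ht]; linarith
  have hsin : Real.sin β = Real.sin t := by rw [ht, Real.sin_pi_sub]
  rw [hsin]
  rcases le_or_gt t (Real.pi / 2) with hc | hc
  · have hms := Real.mul_le_sin htpos.le hc
    have hπ6 : Real.pi ≤ 6 := by nlinarith [Real.pi_lt_d2]
    have hd : t / 3 ≤ 2 / Real.pi * t := by
      rw [div_mul_eq_mul_div, div_le_div_iff₀ (by norm_num) hpi]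
      nlinarith
    linarith
  · -- t ∈ (π/2, 2π/3], sin t = sin (π - t), π - t ∈ [π/3, π/2)
    have h1 : Real.sin t = Real.sin (Real.pi - t) := (Real.sin_pi_sub t).symm
    have h2 : Real.sin (Real.pi / 3) ≤ Real.sin (Real.pi - t) := by
      apply Real.sin_le_sin_of_le_of_le_pi_div_two <;> linarith
    rw [Real.sin_pi_div_three] at h2
    have hs3 : Real.sqrt 3 ^ 2 = 3 := Real.sq_sqrt (by norm_num)
    have hs3' : (1:ℝ) ≤ Real.sqrt 3 := by nlinarith [Real.sqrt_nonneg 3]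
    have hpi' : Real.pi < 3.15 := by
      have := Real.pi_lt_d2
      linarith
    rw [h1]
    nlinarith

private lemma key_lemma (α β S : ℝ) (hS : 1 ≤ S) (hα : 0 < α)
    (hβ3 : Real.pi / 3 ≤ β) (hβπ : β < Real.pi)
    (hsin : Real.sin β ≤ S * Real.sin α) : (Real.pi - β) / (3 * S) < α := by
  have hS0 : 0 < S := by linarith
  have h1 := sin_lb hβ3 hβπ
  have h2 := Real.sin_lt hα
  rw [div_lt_iff₀ (by positivity)]
  nlinarith

theorem stmt3 (A B C : EuclideanSpace ℝ (Fin 2))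
    (hindep : AffineIndependent ℝ ![A, B, C])
    (S : ℝ) (hS : 1 ≤ S)
    (hratio : max (dist A B) (max (dist B C) (dist C A)) ≤
      S * min (dist A B) (min (dist B C) (dist C A)))
    (β : ℝ) (hβ : β = max (∠ B A C) (max (∠ A B C) (∠ B C A)))
    (hβmem : β ∈ Set.Ioo 0 Real.pi) :
    (Real.pi - β) / (3 * S) < ∠ B A C ∧
    (Real.pi - β) / (3 * S) < ∠ A B C ∧
    (Real.pi - β) / (3 * S) < ∠ B C A := by
  have hncol : ¬ Collinear ℝ ({A, B, C} : Set (EuclideanSpace ℝ (Fin 2))) := by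
    rw [← affineIndependent_iff_not_collinear_set]; exact hindep
  have hAB : A ≠ B := fun h => hncol (by rw [h]; exact (collinear_pair ℝ B C).subset (by simp))
  have hAC : A ≠ C := fun h => hncol (by
    rw [h]
    refine (collinear_pair ℝ C B).subset ?_
    intro x hx; simp at hx; rcases hx with h|h|h <;> simp [h])
  have hBC : B ≠ C := fun h => hncol (by
    rw [h]
    refine (collinear_pair ℝ A C).subset ?_
    intro x hx; simp at hx; rcases hx with h|h|h <;> simp [h])
  have hncolBAC : ¬ Collinear ℝ ({B, A, C} : Set (EuclideanSpace ℝ (Fin 2))) := by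
    rw [Set.insert_comm]; exact hncol
  have hncolABC : ¬ Collinear ℝ ({A, B, C} : Set (EuclideanSpace ℝ (Fin 2))) := hncol
  have hncolBCA : ¬ Collinear ℝ ({B, C, A} : Set (EuclideanSpace ℝ (Fin 2))) := by
    intro h; apply hncol
    refine h.subset ?_
    intro x hx; simp at hx; rcases hx with h|h|h <;> simp [h]
  -- positivity of angles
  have ha_pos : 0 < ∠ B A C := angle_pos_of_not_collinear hncolBAC
  have hb_pos : 0 < ∠ A B C := angle_pos_of_not_collinear hncolABC
  have hc_pos : 0 < ∠ B C A := angle_pos_of_not_collinear hncolBCA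
  have ha_sin : 0 ≤ Real.sin (∠ B A C) := Real.sin_nonneg_of_nonneg_of_le_pi ha_pos.le (angle_le_pi _ _ _)
  have hb_sin : 0 ≤ Real.sin (∠ A B C) := Real.sin_nonneg_of_nonneg_of_le_pi hb_pos.le (angle_le_pi _ _ _)
  have hc_sin : 0 ≤ Real.sin (∠ B C A) := Real.sin_nonneg_of_nonneg_of_le_pi hc_pos.le (angle_le_pi _ _ _)
  -- angle sum
  have hsum : ∠ B A C + ∠ A B C + ∠ B C A = Real.pi := by
    have := EuclideanGeometry.angle_add_angle_add_angle_eq_pi (p₁ := C) (p₂ := A) B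
      hAC
    rw [EuclideanGeometry.angle_comm C A B] at this
    linarith [this]
  -- β ≥ π/3
  have hβ3 : Real.pi / 3 ≤ β := by
    rw [hβ]
    by_contra h
    push_neg at h
    have h1 : ∠ B A C < Real.pi / 3 := lt_of_le_of_lt (le_max_left _ _) h
    have h2 : ∠ A B C < Real.pi / 3 :=
      lt_of_le_of_lt ((le_max_left _ _).trans (le_max_right _ _)) h
    have h3 : ∠ B C A < Real.pi / 3 :=
      lt_of_le_of_lt ((le_max_right _ _).trans (le_max_right _ _)) h
    linarith
  have hβπ : β < Real.pi := hβmem.2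
  -- distances
  set m := min (dist A B) (min (dist B C) (dist C A)) with hm
  have hm_pos : 0 < m := by
    apply lt_min (dist_pos.2 hAB)
    exact lt_min (dist_pos.2 hBC) (dist_pos.2 (Ne.symm hAC))
  have hdAB_le : dist A B ≤ S * m := le_trans (le_max_left _ _) hratio
  have hdBC_le : dist B C ≤ S * m :=
    le_trans ((le_max_left _ _).trans (le_max_right _ _)) hratio
  have hdCA_le : dist C A ≤ S * m :=
    le_trans ((le_max_right _ _).trans (le_max_right _ _)) hratio
  have hdAC_le : dist A C ≤ S * m := by rwa [dist_comm]
  have hm_AB : m ≤ dist A B := min_le_left _ _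
  have hm_BC : m ≤ dist B C := (min_le_right _ _).trans (min_le_left _ _)
  have hm_CA : m ≤ dist C A := (min_le_right _ _).trans (min_le_right _ _)
  have hm_AC : m ≤ dist A C := by rwa [dist_comm]
  -- law of sines relations
  have lab : Real.sin (∠ B A C) * dist A C = Real.sin (∠ A B C) * dist B C :=
    sine_rule_pt A B C hAB
  have lac : Real.sin (∠ B A C) * dist A B = Real.sin (∠ B C A) * dist C B := by
    have := sine_rule_pt A C B hAC
    rwa [EuclideanGeometry.angle_comm C A B, EuclideanGeometry.angle_comm A C B] at this
  have lbc : Real.sin (∠ A B C) * dist B A = Real.sin (∠ B C A) * dist C A := by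
    have := sine_rule_pt B C A hBC
    rwa [EuclideanGeometry.angle_comm C B A] at this
  rw [dist_comm C B] at lac
  rw [dist_comm B A] at lbc
  -- pairwise sin comparisons: sin x ≤ S * sin y
  have hba : Real.sin (∠ A B C) ≤ S * Real.sin (∠ B A C) :=
    arith_rel _ _ _ _ m S ha_sin hb_sin hm_pos hdAC_le hm_BC lab
  have hab : Real.sin (∠ B A C) ≤ S * Real.sin (∠ A B C) :=
    arith_rel _ _ _ _ m S hb_sin ha_sin hm_pos hdBC_le hm_AC lab.symm
  have hca : Real.sin (∠ B C A) ≤ S * Real.sin (∠ B A C) :=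
    arith_rel _ _ _ _ m S ha_sin hc_sin hm_pos hdAB_le hm_BC lac
  have hac : Real.sin (∠ B A C) ≤ S * Real.sin (∠ B C A) :=
    arith_rel _ _ _ _ m S hc_sin ha_sin hm_pos hdBC_le hm_AB lac.symm
  have hcb : Real.sin (∠ B C A) ≤ S * Real.sin (∠ A B C) :=
    arith_rel _ _ _ _ m S hb_sin hc_sin hm_pos hdAB_le hm_CA lbc
  have hbc : Real.sin (∠ A B C) ≤ S * Real.sin (∠ B C A) :=
    arith_rel _ _ _ _ m S hc_sin hb_sin hm_pos hdCA_le hm_AB lbc.symm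
  -- β is one of the angles
  have hβcases : β = ∠ B A C ∨ β = ∠ A B C ∨ β = ∠ B C A := by
    rw [hβ]
    rcases max_cases (∠ B A C) (max (∠ A B C) (∠ B C A)) with ⟨h, _⟩ | ⟨h, _⟩
    · exact Or.inl h
    · rcases max_cases (∠ A B C) (∠ B C A) with ⟨h', _⟩ | ⟨h', _⟩
      · exact Or.inr (Or.inl (h.trans h'))
      · exact Or.inr (Or.inr (h.trans h'))
  have hself : ∀ x : ℝ, 0 ≤ Real.sin x → Real.sin x ≤ S * Real.sin x := by
    intro x hx; nlinarith
  refine ⟨?_, ?_, ?_⟩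
  · apply key_lemma _ _ _ hS ha_pos hβ3 hβπ
    rcases hβcases with h | h | h <;> rw [h]
    exacts [hself _ ha_sin, hba, hca]
  · apply key_lemma _ _ _ hS hb_pos hβ3 hβπ
    rcases hβcases with h | h | h <;> rw [h]
    exacts [hab, hself _ hb_sin, hcb]
  · apply key_lemma _ _ _ hS hc_pos hβ3 hβπ
    rcases hβcases with h | h | h <;> rw [h]
    exacts [hac, hbc, hself _ hc_sin]
end

section
/- Let P₀, P₁, …, P_k be points of the Euclidean plane ℝ² with P₀ ≠ 0 and P_k ≠ 0, let L ≥ 0 satisfy Σ_{j=0}^{k−1} dist(P_j, P_{j+1}) ≤ L, and suppose that for some ε with 0 < ε ≤ π the angle at the origin between P₀ and P_k is at least ε. Then every vertex of the chain satisfies ‖P_j‖ ≤ L·(1 + 1/sin ε) for all 0 ≤ j ≤ k. -/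
theorem stmt5 (k : ℕ) (P : ℕ → EuclideanSpace ℝ (Fin 2))
    (h0 : P 0 ≠ 0) (hk : P k ≠ 0)
    (L : ℝ) (hL : 0 ≤ L)
    (hlen : ∑ j ∈ Finset.range k, dist (P j) (P (j + 1)) ≤ L)
    (ε : ℝ) (hε : 0 < ε) (hεπ : ε ≤ Real.pi)
    (hangle : ε ≤ InnerProductGeometry.angle (P 0) (P k)) :
    ∀ j ≤ k, ‖P j‖ ≤ L * (1 + 1 / Real.sin ε) := by
  intro j hj
  set a := ‖P 0‖ with ha
  set b := ‖P k‖ with hb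
  set s := Real.sin (ε / 2) with hsdef
  set c := Real.cos (ε / 2) with hcdef
  have hπ := Real.pi_pos
  have hs : 0 < s := Real.sin_pos_of_pos_of_lt_pi (by linarith) (by linarith)
  have hcnn : 0 ≤ c := Real.cos_nonneg_of_mem_Icc ⟨by linarith, by linarith⟩
  have hc1 : c ≤ 1 := Real.cos_le_one _
  have hsc : s ^ 2 + c ^ 2 = 1 := Real.sin_sq_add_cos_sq _
  have hsinε : Real.sin ε = 2 * s * c := by
    rw [hsdef, hcdef, ← Real.sin_two_mul]
    congr 1
    ring
  -- distance from P 0 to P k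
  have hD : dist (P 0) (P k) ≤ L := le_trans (dist_le_range_sum_dist P k) hlen
  have hDnn : (0:ℝ) ≤ dist (P 0) (P k) := dist_nonneg
  have han : 0 ≤ a := norm_nonneg _
  have hbn : 0 ≤ b := norm_nonneg _
  -- law of cosines
  have hlaw : dist (P 0) (P k) * dist (P 0) (P k)
      = a * a + b * b - 2 * a * b * Real.cos (InnerProductGeometry.angle (P 0) (P k)) := by
    rw [dist_eq_norm]
    exact InnerProductGeometry.norm_sub_sq_eq_norm_sq_add_norm_sq_sub_two_mul_norm_mul_norm_mul_cos_angle _ _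
  have hθπ : InnerProductGeometry.angle (P 0) (P k) ≤ Real.pi :=
    InnerProductGeometry.angle_le_pi _ _
  have hcos : Real.cos (InnerProductGeometry.angle (P 0) (P k)) ≤ Real.cos ε :=
    Real.cos_le_cos_of_nonneg_of_le_pi hε.le hθπ hangle
  have hs2 : s ^ 2 = 1/2 - Real.cos ε / 2 := by
    have h2e : 2 * (ε / 2) = ε := by ring
    rw [hsdef, Real.sin_sq_eq_half_sub, h2e]
  have hcosε1 : -1 ≤ Real.cos ε := Real.neg_one_le_cos ε
  -- key: (a+b) * s ≤ D
  have hsq : ((a + b) * s) ^ 2 ≤ dist (P 0) (P k) ^ 2 := by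
    have hab2 : 0 ≤ 2 * a * b * (Real.cos ε - Real.cos (InnerProductGeometry.angle (P 0) (P k))) := by
      have := mul_nonneg han hbn
      nlinarith
    nlinarith [sq_nonneg (a - b)]
  have habL : (a + b) * s ≤ L := by
    have hXnn : 0 ≤ (a + b) * s := mul_nonneg (by linarith) hs.le
    have h1 := Real.sqrt_le_sqrt hsq
    rw [Real.sqrt_sq hXnn, Real.sqrt_sq hDnn] at h1
    linarith
  -- chain bounds on ‖P j‖
  have hsum : (∑ i ∈ Finset.range j, dist (P i) (P (i+1)))
      + (∑ i ∈ Finset.Ico j k, dist (P i) (P (i+1))) ≤ L := by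
    have := Finset.sum_Ico_consecutive (fun i => dist (P i) (P (i+1)))
      (Nat.zero_le j) hj
    rw [← Nat.Ico_zero_eq_range]
    rw [← Nat.Ico_zero_eq_range] at hlen
    linarith [this, hlen]
  have hj1 : ‖P j‖ ≤ a + ∑ i ∈ Finset.range j, dist (P i) (P (i+1)) := by
    have h1 : dist (P 0) (P j) ≤ ∑ i ∈ Finset.range j, dist (P i) (P (i+1)) :=
      dist_le_range_sum_dist P j
    have h2 : ‖P j‖ = dist (P j) 0 := by simp [dist_eq_norm]
    have h3 : dist (P j) 0 ≤ dist (P j) (P 0) + dist (P 0) 0 := dist_triangle _ _ _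
    have h4 : dist (P 0) 0 = a := by simp [ha]
    rw [h2]
    rw [dist_comm (P j) (P 0)] at h3
    linarith
  have hj2 : ‖P j‖ ≤ b + ∑ i ∈ Finset.Ico j k, dist (P i) (P (i+1)) := by
    have h1 : dist (P j) (P k) ≤ ∑ i ∈ Finset.Ico j k, dist (P i) (P (i+1)) :=
      dist_le_Ico_sum_dist P hj
    have h2 : ‖P j‖ = dist (P j) 0 := by simp [dist_eq_norm]
    have h3 : dist (P j) 0 ≤ dist (P j) (P k) + dist (P k) 0 := dist_triangle _ _ _
    have h4 : dist (P k) 0 = b := by simp [hb]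
    rw [h2]
    linarith
  have h2norm : 2 * ‖P j‖ ≤ a + b + L := by linarith
  have habs : a + b ≤ L / s := by
    rw [le_div_iff₀ hs]; exact habL
  by_cases hc0 : c = 0
  · -- ε = π case: sin ε = 0
    have h1 : s ^ 2 = 1 := by rw [hc0] at hsc; linarith [hsc]
    have hz : (s - 1) * (s + 1) = 0 := by linear_combination h1
    have hs1 : s = 1 := by
      rcases mul_eq_zero.1 hz with h | h
      · linarith
      · linarith
    have hsin0 : Real.sin ε = 0 := by rw [hsinε, hc0]; ring
    rw [hsin0]
    have hab' : a + b ≤ L := by rw [hs1] at habL; linarith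
    have : L * (1 + 1 / 0) = L := by norm_num
    rw [this]
    linarith
  · have hcpos : 0 < c := lt_of_le_of_ne hcnn (Ne.symm hc0)
    have hscpos : 0 < s * c := mul_pos hs hcpos
    have hsc_le : s * c ≤ s := mul_le_of_le_one_right hs.le hc1
    have hdiv : L / s ≤ L / (s * c) := div_le_div_of_nonneg_left hL hscpos hsc_le
    have heq : L * (1 + 1 / Real.sin ε) = L + (L / (s * c)) / 2 := by
      rw [hsinε]
      field_simp
    rw [heq]
    have hLsc : 0 ≤ L / (s * c) := div_nonneg hL hscpos.le
    linarith
end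

section
/- Let w, x, y, z ∈ ℝ² be four points such that every three of them are affinely independent and the open segments (w, y) and (x, z) have a common point (so that wxyz is a convex quadrilateral with diagonals wy and xz). Let weights w_w, w_x, w_y, w_z ∈ ℝ be given, and let f_{xyz}, f_{wxz}, f_{xyw}, f_{wyz} : ℝ² → ℝ be paraboloid lifts interpolating the weights at the indicated triples of points. Suppose the triangulation {xyz, wxz} of the quadrilateral is not locally convex at the diagonal xz, i.e., f_{xyz}(w) < w_w. Then for every point p in the interior of the convex hull of {w, x, y, z}, whenever p lies in an old triangle T₁ ∈ {conv{x,y,z}, conv{w,x,z}} and in a new triangle T₂ ∈ {conv{x,y,w}, conv{w,y,z}}, the corresponding lifts satisfy f_{T₂}(p) > f_{T₁}(p). In other words, replacing the triangles xyz and wxz by xyw and wyz strictly increases the height function at every interior point of the quadrilateral. -/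
lemma key_aux (d : EuclideanSpace ℝ (Fin 2) →ᵃ[ℝ] ℝ)
    (a b : EuclideanSpace ℝ (Fin 2)) (ha : d a = 0) (hb : 0 < d b)
    (S : Set (EuclideanSpace ℝ (Fin 2))) (hS : ∀ v ∈ S, 0 ≤ d v)
    (p : EuclideanSpace ℝ (Fin 2)) (hp : p ∈ interior (convexHull ℝ S)) :
    0 < d p := by
  have hhull : convexHull ℝ S ⊆ {v | 0 ≤ d v} := by
    apply convexHull_min hS
    have : Convex ℝ (d ⁻¹' Set.Ici (0:ℝ)) := (convex_Ici (0:ℝ)).affine_preimage d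
    exact this
  set u : EuclideanSpace ℝ (Fin 2) := a - b with hu
  have hlin : d.linear u = - d b := by
    have : d (u + b) = d.linear u + d b := by
      have := d.map_vadd b u
      simpa [vadd_eq_add] using this
    have h2 : u + b = a := by simp [hu]
    rw [h2, ha] at this
    linarith
  have hune : u ≠ 0 := by
    intro h
    rw [h, map_zero] at hlin
    linarith
  obtain ⟨ε, hε, hball⟩ := Metric.mem_nhds_iff.mp (mem_interior_iff_mem_nhds.mp hp)
  set t : ℝ := ε / (2 * ‖u‖) with ht
  have hupos : 0 < ‖u‖ := norm_pos_iff.mpr hune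
  have htpos : 0 < t := by positivity
  set q : EuclideanSpace ℝ (Fin 2) := t • u + p with hq
  have hqd : d q = t * d.linear u + d p := by
    have := d.map_vadd p (t • u)
    simpa [vadd_eq_add, map_smul, smul_eq_mul] using this
  have hqball : q ∈ Metric.ball p ε := by
    have : dist q p = ‖t • u‖ := by
      rw [dist_eq_norm]; congr 1; simp [hq]
    rw [Metric.mem_ball, this, norm_smul, Real.norm_eq_abs, abs_of_pos htpos, ht]
    have heq : ε / (2 * ‖u‖) * ‖u‖ = ε / 2 := by field_simp
    linarith
  have hq0 : 0 ≤ d q := hhull (hball hqball)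
  rw [hqd, hlin] at hq0
  nlinarith

lemma dq_eval (d : EuclideanSpace ℝ (Fin 2) →ᵃ[ℝ] ℝ) {s s' : ℝ} (h : s + s' = 1)
    (v v' q : EuclideanSpace ℝ (Fin 2)) (hq : s • v + s' • v' = q) :
    d q = s * d v + s' * d v' := by
  rw [← hq]
  exact Convex.combo_affine_apply h


/-- A function `f : ℝ² → ℝ` is a paraboloid lift if it is the sum of the squared norm
and an affine map. -/
def IsParaboloidLift (f : EuclideanSpace ℝ (Fin 2) → ℝ) : Prop :=
  ∃ g : EuclideanSpace ℝ (Fin 2) →ᵃ[ℝ] ℝ, ∀ p, f p = ‖p‖ ^ 2 + g p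

set_option maxHeartbeats 1000000 in
theorem stmt9 (w x y z : EuclideanSpace ℝ (Fin 2))
    (hwxy : AffineIndependent ℝ ![w, x, y])
    (hwxz : AffineIndependent ℝ ![w, x, z])
    (hwyz : AffineIndependent ℝ ![w, y, z])
    (hxyz : AffineIndependent ℝ ![x, y, z])
    (hdiag : ∃ p : EuclideanSpace ℝ (Fin 2),
      p ∈ openSegment ℝ w y ∧ p ∈ openSegment ℝ x z)
    (ww wx wy wz : ℝ)
    (fxyz fwxz fxyw fwyz : EuclideanSpace ℝ (Fin 2) → ℝ)
    (hfxyz : IsParaboloidLift fxyz)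
    (hfwxz : IsParaboloidLift fwxz)
    (hfxyw : IsParaboloidLift fxyw)
    (hfwyz : IsParaboloidLift fwyz)
    (hxyz₁ : fxyz x = wx) (hxyz₂ : fxyz y = wy) (hxyz₃ : fxyz z = wz)
    (hwxz₁ : fwxz w = ww) (hwxz₂ : fwxz x = wx) (hwxz₃ : fwxz z = wz)
    (hxyw₁ : fxyw x = wx) (hxyw₂ : fxyw y = wy) (hxyw₃ : fxyw w = ww)
    (hwyz₁ : fwyz w = ww) (hwyz₂ : fwyz y = wy) (hwyz₃ : fwyz z = wz)
    (hnotconvex : fxyz w < ww) :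
    ∀ p ∈ interior (convexHull ℝ ({w, x, y, z} : Set (EuclideanSpace ℝ (Fin 2)))),
      (p ∈ convexHull ℝ ({x, y, z} : Set (EuclideanSpace ℝ (Fin 2))) →
        p ∈ convexHull ℝ ({x, y, w} : Set (EuclideanSpace ℝ (Fin 2))) →
        fxyw p > fxyz p) ∧
      (p ∈ convexHull ℝ ({x, y, z} : Set (EuclideanSpace ℝ (Fin 2))) →
        p ∈ convexHull ℝ ({w, y, z} : Set (EuclideanSpace ℝ (Fin 2))) →
        fwyz p > fxyz p) ∧
      (p ∈ convexHull ℝ ({w, x, z} : Set (EuclideanSpace ℝ (Fin 2))) →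
        p ∈ convexHull ℝ ({x, y, w} : Set (EuclideanSpace ℝ (Fin 2))) →
        fxyw p > fwxz p) ∧
      (p ∈ convexHull ℝ ({w, x, z} : Set (EuclideanSpace ℝ (Fin 2))) →
        p ∈ convexHull ℝ ({w, y, z} : Set (EuclideanSpace ℝ (Fin 2))) →
        fwyz p > fwxz p) := by
  obtain ⟨gxyz, h1⟩ := hfxyz
  obtain ⟨gwxz, h2⟩ := hfwxz
  obtain ⟨gxyw, h3⟩ := hfxyw
  obtain ⟨gwyz, h4⟩ := hfwyz
  obtain ⟨q, hq1, hq2⟩ := hdiag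
  obtain ⟨s, s', hs, hs', hss, hqeq1⟩ := hq1
  obtain ⟨t, t', ht, ht', htt, hqeq2⟩ := hq2
  -- difference functions
  have hd1 : ∀ p, (gxyw - gxyz) p = fxyw p - fxyz p := fun p => by
    simp only [AffineMap.coe_sub, Pi.sub_apply]; rw [h3 p, h1 p]; ring
  have hd2 : ∀ p, (gwyz - gxyz) p = fwyz p - fxyz p := fun p => by
    simp only [AffineMap.coe_sub, Pi.sub_apply]; rw [h4 p, h1 p]; ring
  have hd3 : ∀ p, (gxyw - gwxz) p = fxyw p - fwxz p := fun p => by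
    simp only [AffineMap.coe_sub, Pi.sub_apply]; rw [h3 p, h2 p]; ring
  have hd4 : ∀ p, (gwyz - gwxz) p = fwyz p - fwxz p := fun p => by
    simp only [AffineMap.coe_sub, Pi.sub_apply]; rw [h4 p, h2 p]; ring
  have he : ∀ p, (gxyz - gwxz) p = fxyz p - fwxz p := fun p => by
    simp only [AffineMap.coe_sub, Pi.sub_apply]; rw [h1 p, h2 p]; ring
  -- (gxyz - gwxz) y > 0
  have heq1 := dq_eval (gxyz - gwxz) hss w y q hqeq1
  have heq2 := dq_eval (gxyz - gwxz) htt x z q hqeq2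
  have hex : (gxyz - gwxz) x = 0 := by rw [he]; rw [hxyz₁, hwxz₂]; ring
  have hez : (gxyz - gwxz) z = 0 := by rw [he]; rw [hxyz₃, hwxz₃]; ring
  have hew : (gxyz - gwxz) w < 0 := by rw [he]; rw [hwxz₁]; linarith
  have hey : 0 < (gxyz - gwxz) y := by
    rw [hex, hez] at heq2
    nlinarith [mul_pos hs (neg_pos.mpr hew)]
  -- d1 = gxyw - gxyz
  have h1x : (gxyw - gxyz) x = 0 := by rw [hd1, hxyw₁, hxyz₁]; ring
  have h1y : (gxyw - gxyz) y = 0 := by rw [hd1, hxyw₂, hxyz₂]; ring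
  have h1w : 0 < (gxyw - gxyz) w := by rw [hd1, hxyw₃]; linarith
  have h1z : 0 < (gxyw - gxyz) z := by
    have a1 := dq_eval (gxyw - gxyz) hss w y q hqeq1
    have a2 := dq_eval (gxyw - gxyz) htt x z q hqeq2
    rw [h1y] at a1; rw [h1x] at a2
    nlinarith [mul_pos hs h1w]
  -- d2 = gwyz - gxyz
  have h2y : (gwyz - gxyz) y = 0 := by rw [hd2, hwyz₂, hxyz₂]; ring
  have h2z : (gwyz - gxyz) z = 0 := by rw [hd2, hwyz₃, hxyz₃]; ring
  have h2w : 0 < (gwyz - gxyz) w := by rw [hd2, hwyz₁]; linarith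
  have h2x : 0 < (gwyz - gxyz) x := by
    have a1 := dq_eval (gwyz - gxyz) hss w y q hqeq1
    have a2 := dq_eval (gwyz - gxyz) htt x z q hqeq2
    rw [h2y] at a1; rw [h2z] at a2
    nlinarith [mul_pos hs h2w]
  -- d3 = gxyw - gwxz
  have h3x : (gxyw - gwxz) x = 0 := by rw [hd3, hxyw₁, hwxz₂]; ring
  have h3w : (gxyw - gwxz) w = 0 := by rw [hd3, hxyw₃, hwxz₁]; ring
  have h3y : 0 < (gxyw - gwxz) y := by
    have : (gxyw - gwxz) y = (gxyz - gwxz) y := by rw [hd3, he, hxyw₂, hxyz₂]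
    rw [this]; exact hey
  have h3z : 0 < (gxyw - gwxz) z := by
    have a1 := dq_eval (gxyw - gwxz) hss w y q hqeq1
    have a2 := dq_eval (gxyw - gwxz) htt x z q hqeq2
    rw [h3w] at a1; rw [h3x] at a2
    nlinarith [mul_pos hs' h3y]
  -- d4 = gwyz - gwxz
  have h4w : (gwyz - gwxz) w = 0 := by rw [hd4, hwyz₁, hwxz₁]; ring
  have h4z : (gwyz - gwxz) z = 0 := by rw [hd4, hwyz₃, hwxz₃]; ring
  have h4y : 0 < (gwyz - gwxz) y := by
    have : (gwyz - gwxz) y = (gxyz - gwxz) y := by rw [hd4, he, hwyz₂, hxyz₂]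
    rw [this]; exact hey
  have h4x : 0 < (gwyz - gwxz) x := by
    have a1 := dq_eval (gwyz - gwxz) hss w y q hqeq1
    have a2 := dq_eval (gwyz - gwxz) htt x z q hqeq2
    rw [h4w] at a1; rw [h4z] at a2
    nlinarith [mul_pos hs' h4y]
  intro p hp
  have memS : ∀ (d : EuclideanSpace ℝ (Fin 2) →ᵃ[ℝ] ℝ),
      0 ≤ d w → 0 ≤ d x → 0 ≤ d y → 0 ≤ d z →
      ∀ v ∈ ({w, x, y, z} : Set (EuclideanSpace ℝ (Fin 2))), 0 ≤ d v := by
    intro d hw hx hy hz v hv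
    simp only [Set.mem_insert_iff, Set.mem_singleton_iff] at hv
    rcases hv with rfl | rfl | rfl | rfl <;> assumption
  refine ⟨fun _ _ => ?_, fun _ _ => ?_, fun _ _ => ?_, fun _ _ => ?_⟩
  · have := key_aux (gxyw - gxyz) x w h1x h1w _ (memS (gxyw - gxyz) h1w.le h1x.ge h1y.ge h1z.le) p hp
    rw [hd1] at this; linarith
  · have := key_aux (gwyz - gxyz) y w h2y h2w _ (memS (gwyz - gxyz) h2w.le h2x.le h2y.ge h2z.ge) p hp
    rw [hd2] at this; linarith
  · have := key_aux (gxyw - gwxz) x y h3x h3y _ (memS (gxyw - gwxz) h3w.ge h3x.ge h3y.le h3z.le) p hp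
    rw [hd3] at this; linarith
  · have := key_aux (gwyz - gwxz) w y h4w h4y _ (memS (gwyz - gwxz) h4w.ge h4x.le h4y.le h4z.ge) p hp
    rw [hd4] at this; linarith
end
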